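/- arXiv:1706.01254 — 5 statements merged into one kernel-verified Lean document; each statement's English description precedes it below -/
import Mathlib

section
/- For every λ ∈ (0,1) and every R > 0, the matrix z_Pe(λ) is a global maximizer of z ↦ g(λ, z) over all 2×2 real matrices. -/
/-- The Principal's reduced objective `g(λ, z)` in the model with a Planner. -/
noncomputable def g (k11 k12 k21 k22 R lam : ℝ) (z : Fin 2 → Fin 2 → ℝ) : ℝ :=
  -(R / 2) * (z 0 0 + z 0 1 - 1) ^ 2 - (R / 2) * (z 1 0 + z 1 1 - 1) ^ 2
    + (lam * z 0 0 + (1 - lam) * z 0 1) * (1 / (lam * k11) + 1 / ((1 - lam) * k12))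
    + (lam * z 1 0 + (1 - lam) * z 1 1) * (1 / ((1 - lam) * k22) + 1 / (lam * k21))
    - (lam * z 0 0 + (1 - lam) * z 0 1) ^ 2 / (2 * lam ^ 2 * k11)
    - (lam * z 1 0 + (1 - lam) * z 1 1) ^ 2 / (2 * lam ^ 2 * k21)
    - (lam * z 1 0 + (1 - lam) * z 1 1) ^ 2 / (2 * (1 - lam) ^ 2 * k22)
    - (lam * z 0 0 + (1 - lam) * z 0 1) ^ 2 / (2 * (1 - lam) ^ 2 * k12)

/-- The Pareto-optimal sensitivities `z_Pe(λ)`. -/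
noncomputable def zPe (k11 k12 k21 k22 lam : ℝ) : Fin 2 → Fin 2 → ℝ :=
  ![![(1 - lam) ^ 2 * k12 / (lam ^ 2 * k11 + (1 - lam) ^ 2 * k12),
      lam ^ 2 * k11 / (lam ^ 2 * k11 + (1 - lam) ^ 2 * k12)],
    ![(1 - lam) ^ 2 * k22 / (lam ^ 2 * k21 + (1 - lam) ^ 2 * k22),
      lam ^ 2 * k21 / (lam ^ 2 * k21 + (1 - lam) ^ 2 * k22)]]

/-- Row bound: a concave quadratic in `(x, s)` is bounded by `A^2/(4B)`. -/
lemma row_quad_le (R A B x s : ℝ) (hR : 0 ≤ R) (hB : 0 < B) :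
    -(R / 2) * (s - 1) ^ 2 + x * A - B * x ^ 2 ≤ A ^ 2 / (4 * B) := by
  rw [le_div_iff₀ (by positivity)]
  nlinarith [sq_nonneg (A - 2 * B * x), sq_nonneg (s - 1), mul_nonneg hR (sq_nonneg (s - 1))]

/-- for every `λ ∈ (0,1)` and `R > 0`, `z_Pe(λ)` is a global maximizer of
`z ↦ g(λ, z)` over all 2×2 real matrices. -/
theorem zPe_isMaxOn (k11 k12 k21 k22 : ℝ)
    (hk11 : 0 < k11) (hk12 : 0 < k12) (hk21 : 0 < k21) (hk22 : 0 < k22)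
    (lam : ℝ) (hlam : lam ∈ Set.Ioo (0 : ℝ) 1) (R : ℝ) (hR : 0 < R) :
    ∀ z : Fin 2 → Fin 2 → ℝ,
      g k11 k12 k21 k22 R lam z ≤ g k11 k12 k21 k22 R lam (zPe k11 k12 k21 k22 lam) := by
  obtain ⟨hl0, hl1⟩ := hlam
  have hM : 0 < 1 - lam := by linarith
  set M := 1 - lam with hMdef
  intro z
  -- abbreviations
  set A1 : ℝ := 1 / (lam * k11) + 1 / (M * k12) with hA1
  set A2 : ℝ := 1 / (M * k22) + 1 / (lam * k21) with hA2
  set B1 : ℝ := 1 / (2 * lam ^ 2 * k11) + 1 / (2 * M ^ 2 * k12) with hB1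
  set B2 : ℝ := 1 / (2 * lam ^ 2 * k21) + 1 / (2 * M ^ 2 * k22) with hB2
  have hB1pos : 0 < B1 := by rw [hB1]; positivity
  have hB2pos : 0 < B2 := by rw [hB2]; positivity
  have hD1 : lam ^ 2 * k11 + M ^ 2 * k12 ≠ 0 := by positivity
  have hD2 : lam ^ 2 * k21 + M ^ 2 * k22 ≠ 0 := by positivity
  have hl : lam ≠ 0 := ne_of_gt hl0
  have hMne : M ≠ 0 := ne_of_gt hM
  have hgz : ∀ w : Fin 2 → Fin 2 → ℝ, g k11 k12 k21 k22 R lam w =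
      (-(R / 2) * (w 0 0 + w 0 1 - 1) ^ 2
        + (lam * w 0 0 + M * w 0 1) * A1 - B1 * (lam * w 0 0 + M * w 0 1) ^ 2)
      + (-(R / 2) * (w 1 0 + w 1 1 - 1) ^ 2
        + (lam * w 1 0 + M * w 1 1) * A2 - B2 * (lam * w 1 0 + M * w 1 1) ^ 2) := by
    intro w
    simp only [g, hA1, hA2, hB1, hB2, hMdef]
    ring

  rw [hgz]
  have z00 : zPe k11 k12 k21 k22 lam 0 0 = M ^ 2 * k12 / (lam ^ 2 * k11 + M ^ 2 * k12) := rfl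
  have z01 : zPe k11 k12 k21 k22 lam 0 1 = lam ^ 2 * k11 / (lam ^ 2 * k11 + M ^ 2 * k12) := rfl
  have z10 : zPe k11 k12 k21 k22 lam 1 0 = M ^ 2 * k22 / (lam ^ 2 * k21 + M ^ 2 * k22) := rfl
  have z11 : zPe k11 k12 k21 k22 lam 1 1 = lam ^ 2 * k21 / (lam ^ 2 * k21 + M ^ 2 * k22) := rfl
  rw [hgz (zPe k11 k12 k21 k22 lam), z00, z01, z10, z11]
  have s1 : M ^ 2 * k12 / (lam ^ 2 * k11 + M ^ 2 * k12)
      + lam ^ 2 * k11 / (lam ^ 2 * k11 + M ^ 2 * k12) = 1 := by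
    field_simp
    ring
  have s2 : M ^ 2 * k22 / (lam ^ 2 * k21 + M ^ 2 * k22)
      + lam ^ 2 * k21 / (lam ^ 2 * k21 + M ^ 2 * k22) = 1 := by
    field_simp
    ring
  have x1 : lam * (M ^ 2 * k12 / (lam ^ 2 * k11 + M ^ 2 * k12))
      + M * (lam ^ 2 * k11 / (lam ^ 2 * k11 + M ^ 2 * k12)) = A1 / (2 * B1) := by
    rw [hA1, hB1]
    rw [eq_div_iff (by positivity)]
    field_simp
    ring
  have x2 : lam * (M ^ 2 * k22 / (lam ^ 2 * k21 + M ^ 2 * k22))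
      + M * (lam ^ 2 * k21 / (lam ^ 2 * k21 + M ^ 2 * k22)) = A2 / (2 * B2) := by
    rw [hA2, hB2]
    rw [eq_div_iff (by positivity)]
    field_simp
    ring
  rw [s1, s2, x1, x2]
  have hval1 : -(R / 2) * (1 - 1) ^ 2 + A1 / (2 * B1) * A1 - B1 * (A1 / (2 * B1)) ^ 2
      = A1 ^ 2 / (4 * B1) := by
    field_simp
    ring
  have hval2 : -(R / 2) * (1 - 1) ^ 2 + A2 / (2 * B2) * A2 - B2 * (A2 / (2 * B2)) ^ 2
      = A2 ^ 2 / (4 * B2) := by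
    field_simp
    ring
  rw [hval1, hval2]
  have h1 := row_quad_le R A1 B1 (lam * z 0 0 + M * z 0 1) (z 0 0 + z 0 1) hR.le hB1pos
  have h2 := row_quad_le R A2 B2 (lam * z 1 0 + M * z 1 1) (z 1 0 + z 1 1) hR.le hB2pos
  linarith
end

section
/- For every λ ∈ (0,1) with λ ≠ 1/2 and every R > 0, the matrix z_Pe(λ) is the unique global maximizer of z ↦ g(λ, z) over all 2×2 real matrices. -/
private lemma quad_vertex (c d u v : ℝ) (h : c = 2 * d * v) :
    c * u - d * u ^ 2 = c * v - d * v ^ 2 - d * (u - v) ^ 2 := by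
  linear_combination (u - v) * h

private lemma g_decomp (k11 k12 k21 k22 R lam : ℝ) (z : Fin 2 → Fin 2 → ℝ) :
    g k11 k12 k21 k22 R lam z
      = -(R / 2) * (z 0 0 + z 0 1 - 1) ^ 2 - (R / 2) * (z 1 0 + z 1 1 - 1) ^ 2
        + (1 / (lam * k11) + 1 / ((1 - lam) * k12)) * (lam * z 0 0 + (1 - lam) * z 0 1)
        - (1 / (2 * lam ^ 2 * k11) + 1 / (2 * (1 - lam) ^ 2 * k12))
            * (lam * z 0 0 + (1 - lam) * z 0 1) ^ 2
        + (1 / ((1 - lam) * k22) + 1 / (lam * k21)) * (lam * z 1 0 + (1 - lam) * z 1 1)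
        - (1 / (2 * lam ^ 2 * k21) + 1 / (2 * (1 - lam) ^ 2 * k22))
            * (lam * z 1 0 + (1 - lam) * z 1 1) ^ 2 := by
  simp only [g]; ring

private lemma vertex_eq (k11 k12 lam : ℝ)
    (hk11 : 0 < k11) (hk12 : 0 < k12) (hl : 0 < lam) (hL : 0 < 1 - lam) :
    1 / (lam * k11) + 1 / ((1 - lam) * k12)
      = 2 * (1 / (2 * lam ^ 2 * k11) + 1 / (2 * (1 - lam) ^ 2 * k12))
          * (lam * (1 - lam) * (lam * k11 + (1 - lam) * k12)
              / (lam ^ 2 * k11 + (1 - lam) ^ 2 * k12)) := by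
  have hA : (0:ℝ) < lam ^ 2 * k11 + (1 - lam) ^ 2 * k12 := by positivity
  field_simp; ring

private lemma u_at_zPe (k11 k12 lam : ℝ)
    (hk11 : 0 < k11) (hk12 : 0 < k12) (hl : 0 < lam) (hL : 0 < 1 - lam) :
    lam * ((1 - lam) ^ 2 * k12 / (lam ^ 2 * k11 + (1 - lam) ^ 2 * k12))
      + (1 - lam) * (lam ^ 2 * k11 / (lam ^ 2 * k11 + (1 - lam) ^ 2 * k12))
      = lam * (1 - lam) * (lam * k11 + (1 - lam) * k12)
          / (lam ^ 2 * k11 + (1 - lam) ^ 2 * k12) := by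
  have hA : (0:ℝ) < lam ^ 2 * k11 + (1 - lam) ^ 2 * k12 := by positivity
  field_simp; ring

private lemma s_at_zPe (k11 k12 lam : ℝ)
    (hk11 : 0 < k11) (hk12 : 0 < k12) (hl : 0 < lam) (hL : 0 < 1 - lam) :
    (1 - lam) ^ 2 * k12 / (lam ^ 2 * k11 + (1 - lam) ^ 2 * k12)
      + lam ^ 2 * k11 / (lam ^ 2 * k11 + (1 - lam) ^ 2 * k12) = 1 := by
  have hA : (0:ℝ) < lam ^ 2 * k11 + (1 - lam) ^ 2 * k12 := by positivity
  field_simp; ring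

/-- for every `λ ∈ (0,1)` with `λ ≠ 1/2` and `R > 0`, `z_Pe(λ)` is the unique
global maximizer of `z ↦ g(λ, z)`: it maximizes `g(λ, ·)` and any global maximizer equals it. -/
theorem zPe_unique_maximizer (k11 k12 k21 k22 : ℝ)
    (hk11 : 0 < k11) (hk12 : 0 < k12) (hk21 : 0 < k21) (hk22 : 0 < k22)
    (lam : ℝ) (hlam : lam ∈ Set.Ioo (0 : ℝ) 1) (hlam' : lam ≠ 1 / 2) (R : ℝ) (hR : 0 < R) :
    (∀ z : Fin 2 → Fin 2 → ℝ,
        g k11 k12 k21 k22 R lam z ≤ g k11 k12 k21 k22 R lam (zPe k11 k12 k21 k22 lam)) ∧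
      (∀ z : Fin 2 → Fin 2 → ℝ,
        (∀ w : Fin 2 → Fin 2 → ℝ, g k11 k12 k21 k22 R lam w ≤ g k11 k12 k21 k22 R lam z) →
          z = zPe k11 k12 k21 k22 lam) := by
  obtain ⟨hl, hu⟩ := hlam
  have hL : 0 < 1 - lam := by linarith
  set p : Fin 2 → Fin 2 → ℝ := zPe k11 k12 k21 k22 lam with hp
  have hp00 : p 0 0 = (1 - lam) ^ 2 * k12 / (lam ^ 2 * k11 + (1 - lam) ^ 2 * k12) := by
    simp [hp, zPe]
  have hp01 : p 0 1 = lam ^ 2 * k11 / (lam ^ 2 * k11 + (1 - lam) ^ 2 * k12) := by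
    simp [hp, zPe]
  have hp10 : p 1 0 = (1 - lam) ^ 2 * k22 / (lam ^ 2 * k21 + (1 - lam) ^ 2 * k22) := by
    simp [hp, zPe]
  have hp11 : p 1 1 = lam ^ 2 * k21 / (lam ^ 2 * k21 + (1 - lam) ^ 2 * k22) := by
    simp [hp, zPe]
  -- abbreviations
  set d1 : ℝ := 1 / (2 * lam ^ 2 * k11) + 1 / (2 * (1 - lam) ^ 2 * k12) with hd1
  set d2 : ℝ := 1 / (2 * lam ^ 2 * k21) + 1 / (2 * (1 - lam) ^ 2 * k22) with hd2
  set c1 : ℝ := 1 / (lam * k11) + 1 / ((1 - lam) * k12) with hc1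
  set c2 : ℝ := 1 / ((1 - lam) * k22) + 1 / (lam * k21) with hc2
  set v1 : ℝ := lam * (1 - lam) * (lam * k11 + (1 - lam) * k12)
      / (lam ^ 2 * k11 + (1 - lam) ^ 2 * k12) with hv1
  set v2 : ℝ := lam * (1 - lam) * (lam * k21 + (1 - lam) * k22)
      / (lam ^ 2 * k21 + (1 - lam) ^ 2 * k22) with hv2
  have hd1pos : 0 < d1 := by rw [hd1]; positivity
  have hd2pos : 0 < d2 := by rw [hd2]; positivity
  have hvert1 : c1 = 2 * d1 * v1 := vertex_eq k11 k12 lam hk11 hk12 hl hL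
  have hvert2 : c2 = 2 * d2 * v2 := by
    rw [hc2, hd2, hv2, add_comm (1 / ((1 - lam) * k22))]
    exact vertex_eq k21 k22 lam hk21 hk22 hl hL
  have hS0 : p 0 0 + p 0 1 = 1 := by
    rw [hp00, hp01]; exact s_at_zPe k11 k12 lam hk11 hk12 hl hL
  have hS1 : p 1 0 + p 1 1 = 1 := by
    rw [hp10, hp11]; exact s_at_zPe k21 k22 lam hk21 hk22 hl hL
  have hU0 : lam * p 0 0 + (1 - lam) * p 0 1 = v1 := by
    rw [hp00, hp01, hv1]; exact u_at_zPe k11 k12 lam hk11 hk12 hl hL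
  have hU1 : lam * p 1 0 + (1 - lam) * p 1 1 = v2 := by
    rw [hp10, hp11, hv2]; exact u_at_zPe k21 k22 lam hk21 hk22 hl hL
  clear_value p d1 d2 c1 c2 v1 v2
  -- key identity
  have key : ∀ z : Fin 2 → Fin 2 → ℝ,
      g k11 k12 k21 k22 R lam z
        = g k11 k12 k21 k22 R lam p
          - R / 2 * (z 0 0 + z 0 1 - 1) ^ 2 - R / 2 * (z 1 0 + z 1 1 - 1) ^ 2
          - d1 * ((lam * z 0 0 + (1 - lam) * z 0 1) - v1) ^ 2
          - d2 * ((lam * z 1 0 + (1 - lam) * z 1 1) - v2) ^ 2 := by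
    intro z
    rw [g_decomp k11 k12 k21 k22 R lam z, g_decomp k11 k12 k21 k22 R lam p,
      hU0, hU1, hS0, hS1, ← hc1, ← hc2, ← hd1, ← hd2]
    linear_combination
      quad_vertex c1 d1 (lam * z 0 0 + (1 - lam) * z 0 1) v1 hvert1
        + quad_vertex c2 d2 (lam * z 1 0 + (1 - lam) * z 1 1) v2 hvert2
  have hmax : ∀ z : Fin 2 → Fin 2 → ℝ,
      g k11 k12 k21 k22 R lam z ≤ g k11 k12 k21 k22 R lam p := by
    intro z
    rw [key z]
    have t1 : 0 ≤ R / 2 * (z 0 0 + z 0 1 - 1) ^ 2 := by positivity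
    have t2 : 0 ≤ R / 2 * (z 1 0 + z 1 1 - 1) ^ 2 := by positivity
    have t3 : 0 ≤ d1 * ((lam * z 0 0 + (1 - lam) * z 0 1) - v1) ^ 2 := by positivity
    have t4 : 0 ≤ d2 * ((lam * z 1 0 + (1 - lam) * z 1 1) - v2) ^ 2 := by positivity
    linarith
  refine ⟨hmax, ?_⟩
  intro z hz
  have h := hz p
  rw [key z] at h
  have t1 : 0 ≤ R / 2 * (z 0 0 + z 0 1 - 1) ^ 2 := by positivity
  have t2 : 0 ≤ R / 2 * (z 1 0 + z 1 1 - 1) ^ 2 := by positivity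
  have t3 : 0 ≤ d1 * ((lam * z 0 0 + (1 - lam) * z 0 1) - v1) ^ 2 := by positivity
  have t4 : 0 ≤ d2 * ((lam * z 1 0 + (1 - lam) * z 1 1) - v2) ^ 2 := by positivity
  have e1 : R / 2 * (z 0 0 + z 0 1 - 1) ^ 2 = 0 := by linarith
  have e2 : R / 2 * (z 1 0 + z 1 1 - 1) ^ 2 = 0 := by linarith
  have e3 : d1 * ((lam * z 0 0 + (1 - lam) * z 0 1) - v1) ^ 2 = 0 := by linarith
  have e4 : d2 * ((lam * z 1 0 + (1 - lam) * z 1 1) - v2) ^ 2 = 0 := by linarith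
  have hR2 : R / 2 ≠ 0 := by positivity
  have s0 : z 0 0 + z 0 1 = 1 := by
    have := sq_eq_zero_iff.mp ((mul_eq_zero.mp e1).resolve_left hR2)
    linarith
  have s1 : z 1 0 + z 1 1 = 1 := by
    have := sq_eq_zero_iff.mp ((mul_eq_zero.mp e2).resolve_left hR2)
    linarith
  have u0 : lam * z 0 0 + (1 - lam) * z 0 1 = v1 := by
    have := sq_eq_zero_iff.mp
      ((mul_eq_zero.mp e3).resolve_left hd1pos.ne')
    linarith
  have u1 : lam * z 1 0 + (1 - lam) * z 1 1 = v2 := by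
    have := sq_eq_zero_iff.mp
      ((mul_eq_zero.mp e4).resolve_left hd2pos.ne')
    linarith
  have h2l : (2 * lam - 1) ≠ 0 := by
    intro h0; apply hlam'; linarith
  have e00 : z 0 0 = p 0 0 := by
    apply mul_left_cancel₀ h2l
    linear_combination u0 - hU0 - (1 - lam) * s0 + (1 - lam) * hS0
  have e01 : z 0 1 = p 0 1 := by
    apply mul_left_cancel₀ h2l
    linear_combination lam * s0 - lam * hS0 - u0 + hU0
  have e10 : z 1 0 = p 1 0 := by
    apply mul_left_cancel₀ h2l
    linear_combination u1 - hU1 - (1 - lam) * s1 + (1 - lam) * hS1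
  have e11 : z 1 1 = p 1 1 := by
    apply mul_left_cancel₀ h2l
    linear_combination lam * s1 - lam * hS1 - u1 + hU1
  funext i j
  fin_cases i <;> fin_cases j <;> assumption
end

section
/- For every R > 0, the function λ ↦ g(λ, z_Pe(λ)) on (0,1) attains its maximum at λ = 1/2: for all λ ∈ (0,1), g(λ, z_Pe(λ)) ≤ 1/(2k11) + 1/(2k12) + 1/(2k21) + 1/(2k22), with equality if and only if λ = 1/2. -/
private lemma row_eq_aux (k1 k2 lam : ℝ) (hk1 : 0 < k1) (hk2 : 0 < k2)
    (hl0 : 0 < lam) (hl1 : lam < 1) :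
    (lam * ((1 - lam) ^ 2 * k2 / (lam ^ 2 * k1 + (1 - lam) ^ 2 * k2))
        + (1 - lam) * (lam ^ 2 * k1 / (lam ^ 2 * k1 + (1 - lam) ^ 2 * k2)))
          * (1 / (lam * k1) + 1 / ((1 - lam) * k2))
      - (lam * ((1 - lam) ^ 2 * k2 / (lam ^ 2 * k1 + (1 - lam) ^ 2 * k2))
        + (1 - lam) * (lam ^ 2 * k1 / (lam ^ 2 * k1 + (1 - lam) ^ 2 * k2))) ^ 2
          / (2 * lam ^ 2 * k1)
      - (lam * ((1 - lam) ^ 2 * k2 / (lam ^ 2 * k1 + (1 - lam) ^ 2 * k2))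
        + (1 - lam) * (lam ^ 2 * k1 / (lam ^ 2 * k1 + (1 - lam) ^ 2 * k2))) ^ 2
          / (2 * (1 - lam) ^ 2 * k2)
    = 1 / (2 * k1) + 1 / (2 * k2)
      - (2 * lam - 1) ^ 2 / (2 * (lam ^ 2 * k1 + (1 - lam) ^ 2 * k2)) := by
  have hl1' : (0:ℝ) < 1 - lam := by linarith
  have hD : (0:ℝ) < lam ^ 2 * k1 + (1 - lam) ^ 2 * k2 := by positivity
  have hA : lam * ((1 - lam) ^ 2 * k2 / (lam ^ 2 * k1 + (1 - lam) ^ 2 * k2))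
        + (1 - lam) * (lam ^ 2 * k1 / (lam ^ 2 * k1 + (1 - lam) ^ 2 * k2))
      = lam * (1 - lam) * (lam * k1 + (1 - lam) * k2)
          / (lam ^ 2 * k1 + (1 - lam) ^ 2 * k2) := by
    field_simp; ring
  rw [hA]
  field_simp
  ring

/-- for every `R > 0`, the function `λ ↦ g(λ, z_Pe(λ))` on `(0,1)` attains its
maximum at `λ = 1/2`: it is `≤ 1/(2 k11) + 1/(2 k12) + 1/(2 k21) + 1/(2 k22)` everywhere, with
equality iff `λ = 1/2`. -/
theorem g_zPe_max_at_half (k11 k12 k21 k22 : ℝ)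
    (hk11 : 0 < k11) (hk12 : 0 < k12) (hk21 : 0 < k21) (hk22 : 0 < k22)
    (R : ℝ) (hR : 0 < R) :
    ∀ lam ∈ Set.Ioo (0 : ℝ) 1,
      g k11 k12 k21 k22 R lam (zPe k11 k12 k21 k22 lam)
          ≤ 1 / (2 * k11) + 1 / (2 * k12) + 1 / (2 * k21) + 1 / (2 * k22) ∧
        (g k11 k12 k21 k22 R lam (zPe k11 k12 k21 k22 lam)
            = 1 / (2 * k11) + 1 / (2 * k12) + 1 / (2 * k21) + 1 / (2 * k22) ↔ lam = 1 / 2) := by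
  rintro lam ⟨hl0, hl1⟩
  have hl1' : (0:ℝ) < 1 - lam := by linarith
  have hD1 : (0:ℝ) < lam ^ 2 * k11 + (1 - lam) ^ 2 * k12 := by positivity
  have hD2 : (0:ℝ) < lam ^ 2 * k21 + (1 - lam) ^ 2 * k22 := by positivity
  have key : g k11 k12 k21 k22 R lam (zPe k11 k12 k21 k22 lam)
      = 1 / (2 * k11) + 1 / (2 * k12) + 1 / (2 * k21) + 1 / (2 * k22)
        - (2 * lam - 1) ^ 2 * (1 / (2 * (lam ^ 2 * k11 + (1 - lam) ^ 2 * k12))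
            + 1 / (2 * (lam ^ 2 * k21 + (1 - lam) ^ 2 * k22))) := by
    have h1 := row_eq_aux k11 k12 lam hk11 hk12 hl0 hl1
    have h2 := row_eq_aux k21 k22 lam hk21 hk22 hl0 hl1
    have hz1 : (1 - lam) ^ 2 * k12 / (lam ^ 2 * k11 + (1 - lam) ^ 2 * k12)
        + lam ^ 2 * k11 / (lam ^ 2 * k11 + (1 - lam) ^ 2 * k12) - 1 = 0 := by
      field_simp; ring
    have hz2 : (1 - lam) ^ 2 * k22 / (lam ^ 2 * k21 + (1 - lam) ^ 2 * k22)
        + lam ^ 2 * k21 / (lam ^ 2 * k21 + (1 - lam) ^ 2 * k22) - 1 = 0 := by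
      field_simp; ring
    simp only [g, zPe, Matrix.cons_val', Matrix.cons_val_zero, Matrix.cons_val_one,
      Matrix.head_cons, Matrix.empty_val', Matrix.cons_val_fin_one, Matrix.head_fin_const]
    linear_combination h1 + h2
      + (-(R / 2) * ((1 - lam) ^ 2 * k12 / (lam ^ 2 * k11 + (1 - lam) ^ 2 * k12)
          + lam ^ 2 * k11 / (lam ^ 2 * k11 + (1 - lam) ^ 2 * k12) - 1)) * hz1
      + (-(R / 2) * ((1 - lam) ^ 2 * k22 / (lam ^ 2 * k21 + (1 - lam) ^ 2 * k22)
          + lam ^ 2 * k21 / (lam ^ 2 * k21 + (1 - lam) ^ 2 * k22) - 1)) * hz2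
  have hpos : (0:ℝ) < 1 / (2 * (lam ^ 2 * k11 + (1 - lam) ^ 2 * k12))
      + 1 / (2 * (lam ^ 2 * k21 + (1 - lam) ^ 2 * k22)) := by positivity
  constructor
  · rw [key]; nlinarith [sq_nonneg (2 * lam - 1)]
  · rw [key]
    constructor
    · intro h
      have h2 : (2 * lam - 1) ^ 2 * (1 / (2 * (lam ^ 2 * k11 + (1 - lam) ^ 2 * k12))
          + 1 / (2 * (lam ^ 2 * k21 + (1 - lam) ^ 2 * k22))) = 0 := by linarith
      have h3 : (2 * lam - 1) ^ 2 = 0 := by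
        rcases mul_eq_zero.mp h2 with h | h
        · exact h
        · exact absurd h (ne_of_gt hpos)
      have : 2 * lam - 1 = 0 := by nlinarith
      linarith
    · intro h; rw [h]; ring
end

section
/- For every R > 0, the strict inequality g_NA(z_NA(R), R) < 1/(2k11) + 1/(2k12) + 1/(2k21) + 1/(2k22) holds; consequently there exists a nonempty open interval Λ ⊆ (0,1) containing 1/2 such that g_NA(z_NA(R), R) ≤ g(λ, z_Pe(λ)) for every λ ∈ Λ (i.e. adding a Planner with Pareto parameter λ ∈ Λ improves the value of the Principal compared to the no-Planner model). -/
/-- The Principal's reduced objective `g_NA(z, R)` in the no-Planner (Nash) model. -/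
noncomputable def gNA (k11 k12 k21 k22 : ℝ) (z : Fin 2 → Fin 2 → ℝ) (R : ℝ) : ℝ :=
  -(R / 2) * (z 0 0 + z 0 1 - 1) ^ 2 - (R / 2) * (z 1 0 + z 1 1 - 1) ^ 2
    + z 0 0 / k11 + z 0 1 / k12 + z 1 0 / k21 + z 1 1 / k22
    - (z 0 0) ^ 2 / (2 * k11) - (z 0 1) ^ 2 / (2 * k12)
    - (z 1 0) ^ 2 / (2 * k21) - (z 1 1) ^ 2 / (2 * k22)

/-- The optimal sensitivities `z_NA(R)` in the no-Planner (Nash) model. -/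
noncomputable def zNA (k11 k12 k21 k22 R : ℝ) : Fin 2 → Fin 2 → ℝ :=
  ![![(1 + R * k12) / (1 + R * (k11 + k12)), (1 + R * k11) / (1 + R * (k11 + k12))],
    ![(1 + R * k22) / (1 + R * (k21 + k22)), (1 + R * k21) / (1 + R * (k21 + k22))]]

lemma quad_le_aux (z k : ℝ) (hk : 0 < k) : z / k - z ^ 2 / (2 * k) ≤ 1 / (2 * k) := by
  have h : 1 / (2 * k) - (z / k - z ^ 2 / (2 * k)) = (z - 1) ^ 2 / (2 * k) := by
    field_simp; ring
  nlinarith [div_nonneg (sq_nonneg (z - 1)) (by linarith : (0:ℝ) ≤ 2 * k)]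

lemma row_lt_aux (k1 k2 R : ℝ) (h1 : 0 < k1) (h2 : 0 < k2) (hR : 0 < R) :
    -(R / 2) * ((1 + R * k2) / (1 + R * (k1 + k2)) + (1 + R * k1) / (1 + R * (k1 + k2)) - 1) ^ 2
      + ((1 + R * k2) / (1 + R * (k1 + k2))) / k1 + ((1 + R * k1) / (1 + R * (k1 + k2))) / k2
      - ((1 + R * k2) / (1 + R * (k1 + k2))) ^ 2 / (2 * k1)
      - ((1 + R * k1) / (1 + R * (k1 + k2))) ^ 2 / (2 * k2)
      < 1 / (2 * k1) + 1 / (2 * k2) := by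
  have hD : 0 < 1 + R * (k1 + k2) := by nlinarith
  have hsum : (1 + R * k2) / (1 + R * (k1 + k2)) + (1 + R * k1) / (1 + R * (k1 + k2)) - 1
      = 1 / (1 + R * (k1 + k2)) := by field_simp; ring
  rw [hsum]
  have h3 : 0 < (R / 2) * (1 / (1 + R * (k1 + k2))) ^ 2 := by positivity
  have := quad_le_aux ((1 + R * k2) / (1 + R * (k1 + k2))) k1 h1
  have := quad_le_aux ((1 + R * k1) / (1 + R * (k1 + k2))) k2 h2
  linarith

/-- for every `R > 0`, `g_NA(z_NA(R), R) < 1/(2 k11) + 1/(2 k12) + 1/(2 k21)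
+ 1/(2 k22)`; consequently there is a nonempty open interval `Λ = (a, b) ⊆ (0,1)` containing
`1/2` such that `g_NA(z_NA(R), R) ≤ g(λ, z_Pe(λ))` for every `λ ∈ Λ` (adding a Planner with
Pareto parameter in `Λ` improves the value of the Principal). -/
theorem planner_improves_principal (k11 k12 k21 k22 : ℝ)
    (hk11 : 0 < k11) (hk12 : 0 < k12) (hk21 : 0 < k21) (hk22 : 0 < k22)
    (R : ℝ) (hR : 0 < R) :
    gNA k11 k12 k21 k22 (zNA k11 k12 k21 k22 R) R
        < 1 / (2 * k11) + 1 / (2 * k12) + 1 / (2 * k21) + 1 / (2 * k22) ∧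
      ∃ a b : ℝ, a < 1 / 2 ∧ (1 : ℝ) / 2 < b ∧ Set.Ioo a b ⊆ Set.Ioo (0 : ℝ) 1 ∧
        ∀ lam ∈ Set.Ioo a b,
          gNA k11 k12 k21 k22 (zNA k11 k12 k21 k22 R) R
            ≤ g k11 k12 k21 k22 R lam (zPe k11 k12 k21 k22 lam) := by
  -- the strict inequality
  have hlt : gNA k11 k12 k21 k22 (zNA k11 k12 k21 k22 R) R
      < 1 / (2 * k11) + 1 / (2 * k12) + 1 / (2 * k21) + 1 / (2 * k22) := by
    have hrow1 := row_lt_aux k11 k12 R hk11 hk12 hR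
    have hrow2 := row_lt_aux k21 k22 R hk21 hk22 hR
    have heq : gNA k11 k12 k21 k22 (zNA k11 k12 k21 k22 R) R =
        (-(R / 2) * ((1 + R * k12) / (1 + R * (k11 + k12))
            + (1 + R * k11) / (1 + R * (k11 + k12)) - 1) ^ 2
          + ((1 + R * k12) / (1 + R * (k11 + k12))) / k11
          + ((1 + R * k11) / (1 + R * (k11 + k12))) / k12
          - ((1 + R * k12) / (1 + R * (k11 + k12))) ^ 2 / (2 * k11)
          - ((1 + R * k11) / (1 + R * (k11 + k12))) ^ 2 / (2 * k12))
        + (-(R / 2) * ((1 + R * k22) / (1 + R * (k21 + k22))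
            + (1 + R * k21) / (1 + R * (k21 + k22)) - 1) ^ 2
          + ((1 + R * k22) / (1 + R * (k21 + k22))) / k21
          + ((1 + R * k21) / (1 + R * (k21 + k22))) / k22
          - ((1 + R * k22) / (1 + R * (k21 + k22))) ^ 2 / (2 * k21)
          - ((1 + R * k21) / (1 + R * (k21 + k22))) ^ 2 / (2 * k22)) := by
      simp only [gNA, zNA, Matrix.cons_val', Matrix.cons_val_zero, Matrix.cons_val_one,
        Matrix.head_cons, Matrix.empty_val', Matrix.cons_val_fin_one, Matrix.head_fin_const]
      ring
    rw [heq]; linarith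
  refine ⟨hlt, ?_⟩
  -- value at λ = 1/2
  have hval : g k11 k12 k21 k22 R (1/2) (zPe k11 k12 k21 k22 (1/2))
      = 1 / (2 * k11) + 1 / (2 * k12) + 1 / (2 * k21) + 1 / (2 * k22) := by
    have h1 : k11 + k12 ≠ 0 := by positivity
    have h2 : k21 + k22 ≠ 0 := by positivity
    simp only [g, zPe, Matrix.cons_val', Matrix.cons_val_zero, Matrix.cons_val_one,
      Matrix.head_cons, Matrix.empty_val', Matrix.cons_val_fin_one, Matrix.head_fin_const]
    norm_num
    field_simp
    ring
  -- continuity at λ = 1/2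
  have hcont : ContinuousAt
      (fun lam => g k11 k12 k21 k22 R lam (zPe k11 k12 k21 k22 lam)) (1/2) := by
    simp only [g, zPe, Matrix.cons_val', Matrix.cons_val_zero, Matrix.cons_val_one,
      Matrix.head_cons, Matrix.empty_val', Matrix.cons_val_fin_one, Matrix.head_fin_const]
    fun_prop (disch := norm_num; positivity)
  have hfl : gNA k11 k12 k21 k22 (zNA k11 k12 k21 k22 R) R
      < (fun lam => g k11 k12 k21 k22 R lam (zPe k11 k12 k21 k22 lam)) (1/2) := by
    simp only []
    rw [hval]; exact hlt
  have hev : ∀ᶠ lam in nhds (1/2 : ℝ),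
      gNA k11 k12 k21 k22 (zNA k11 k12 k21 k22 R) R
        < g k11 k12 k21 k22 R lam (zPe k11 k12 k21 k22 lam) :=
    hcont.eventually (eventually_gt_nhds hfl)
  rcases Metric.eventually_nhds_iff.mp hev with ⟨ε, hε, hball⟩
  refine ⟨max (1/2 - ε) (1/4), min (1/2 + ε) (3/4), ?_, ?_, ?_, ?_⟩
  · exact max_lt (by linarith) (by norm_num)
  · exact lt_min (by linarith) (by norm_num)
  · intro x hx
    rcases hx with ⟨hxa, hxb⟩
    have h1 : (1/4 : ℝ) < x := lt_of_le_of_lt (le_max_right _ _) hxa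
    have h2 : x < (3/4 : ℝ) := lt_of_lt_of_le hxb (min_le_right _ _)
    exact ⟨by linarith, by linarith⟩
  · intro lam hlam
    rcases hlam with ⟨hla, hlb⟩
    have h1 : 1/2 - ε < lam := lt_of_le_of_lt (le_max_left _ _) hla
    have h2 : lam < 1/2 + ε := lt_of_lt_of_le hlb (min_le_left _ _)
    have hd : dist lam (1/2 : ℝ) < ε := by
      rw [Real.dist_eq, abs_sub_lt_iff]; constructor <;> linarith
    exact le_of_lt (hball hd)
end

section
/- The quantity E := (k12/(k11+k12))/k11 · (1 − k12/(2(k11+k12))) + (k11/(k11+k12))/k12 · (1 − k11/(2(k11+k12))) + (k22/(k22+k21))/k21 · (1 − k22/(2(k22+k21))) + (k21/(k22+k21))/k22 · (1 − k21/(2(k22+k21))) satisfies both strict inequalities E > 1/(2k11) + 1/(2k21) and E > 1/(2k22) + 1/(2k12). -/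
lemma aux_pair (a b : ℝ) (ha : 0 < a) (hb : 0 < b) :
    1 / (2 * a) < (b / (a + b)) / a * (1 - b / (2 * (a + b)))
      + (a / (a + b)) / b * (1 - a / (2 * (a + b))) := by
  have hs : 0 < a + b := by linarith
  rw [div_lt_iff₀ (by positivity : (0:ℝ) < 2*a)]
  have h2s : (0:ℝ) < 2*(a+b) := by linarith
  field_simp
  nlinarith [mul_pos ha hb, sq_nonneg a, sq_nonneg b, mul_pos (mul_pos ha ha) hb, mul_pos ha (mul_pos hb hb), pow_pos ha 3, pow_pos hb 3, mul_pos (mul_pos ha ha) (mul_pos ha hb)]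

/-- the limiting value
`E := (k12/(k11+k12))/k11 (1 − k12/(2(k11+k12))) + (k11/(k11+k12))/k12 (1 − k11/(2(k11+k12)))
  + (k22/(k22+k21))/k21 (1 − k22/(2(k22+k21))) + (k21/(k22+k21))/k22 (1 − k21/(2(k22+k21)))`
satisfies `E > 1/(2 k11) + 1/(2 k21)` and `E > 1/(2 k22) + 1/(2 k12)`. -/
theorem limit_value_gt_weak_pareto (k11 k12 k21 k22 : ℝ)
    (hk11 : 0 < k11) (hk12 : 0 < k12) (hk21 : 0 < k21) (hk22 : 0 < k22) :
    1 / (2 * k11) + 1 / (2 * k21)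
        < (k12 / (k11 + k12)) / k11 * (1 - k12 / (2 * (k11 + k12)))
          + (k11 / (k11 + k12)) / k12 * (1 - k11 / (2 * (k11 + k12)))
          + (k22 / (k22 + k21)) / k21 * (1 - k22 / (2 * (k22 + k21)))
          + (k21 / (k22 + k21)) / k22 * (1 - k21 / (2 * (k22 + k21))) ∧
      1 / (2 * k22) + 1 / (2 * k12)
        < (k12 / (k11 + k12)) / k11 * (1 - k12 / (2 * (k11 + k12)))
          + (k11 / (k11 + k12)) / k12 * (1 - k11 / (2 * (k11 + k12)))
          + (k22 / (k22 + k21)) / k21 * (1 - k22 / (2 * (k22 + k21)))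
          + (k21 / (k22 + k21)) / k22 * (1 - k21 / (2 * (k22 + k21))) := by
  have h1 := aux_pair k11 k12 hk11 hk12
  have h2 := aux_pair k21 k22 hk21 hk22
  have h3 := aux_pair k12 k11 hk12 hk11
  have h4 := aux_pair k22 k21 hk22 hk21
  have e1 : k12 + k11 = k11 + k12 := by ring
  have e2 : k21 + k22 = k22 + k21 := by ring
  rw [e1] at h3
  rw [e2] at h2
  constructor <;> linarith
end
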